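/- Let X be a simplicial set, d ≥ 1, and let N denote the nerve of the one-object groupoid whose morphism group is ZMod d, so that the 1-simplices of N are elements of ZMod d and a 2-simplex is a pair (a₁, a₂) with faces d₀ = a₂, d₁ = a₁ + a₂, d₂ = a₁. Then the map sending a simplicial set morphism r : X ⟶ N to the induced function f : X₁ → ZMod d on 1-simplices is a bijection onto the set of functions f : X₁ → ZMod d satisfying f(d₁σ) = f(d₂σ) + f(d₀σ) for every 2-simplex σ of X. -/

import Mathlib

open CategoryTheory Simplicial

/-- The label in `ZMod d` carried by a 1-simplex of `X` under a simplicial map from `X`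
to the nerve of the one-object groupoid with morphism group `ZMod d`. -/
noncomputable def edgeLabel (d : ℕ) (X : SSet)
    (r : X ⟶ nerve (SingleObj (Multiplicative (ZMod d)))) (e : X _⦋1⦌) : ZMod d :=
  Multiplicative.toAdd
    ((SingleObj.toEnd (Multiplicative (ZMod d))).symm
      (ComposableArrows.map' (r.app (Opposite.op (SimplexCategory.mk 1)) e) 0 1))

namespace Cocycle

variable {d : ℕ} {X : SSet.{0}}

local notation "G" => Multiplicative (ZMod d)

/-- edge from i to j of an n-simplex -/
def ed {n : ℕ} (i j : Fin (n+1)) (h : i ≤ j) (x : X _⦋n⦌) : X _⦋1⦌ :=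
  X.map (SimplexCategory.mkOfLe i j h).op x

lemma mkOfLe_comp {n m : ℕ} (i j : Fin (n+1)) (h : i ≤ j) (θ : (⦋n⦌ : SimplexCategory) ⟶ ⦋m⦌) :
    SimplexCategory.mkOfLe i j h ≫ θ =
      SimplexCategory.mkOfLe (θ.toOrderHom i) (θ.toOrderHom j) (θ.toOrderHom.monotone h) := by
  ext x : 3
  fin_cases x <;> rfl

lemma δ1_mkOfLeComp {n : ℕ} (i j k : Fin (n+1)) (h₁ : i ≤ j) (h₂ : j ≤ k) :
    SimplexCategory.δ 1 ≫ SimplexCategory.mkOfLeComp i j k h₁ h₂ =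
      SimplexCategory.mkOfLe i k (h₁.trans h₂) := by
  ext x : 3
  fin_cases x <;> rfl

lemma δ2_mkOfLeComp {n : ℕ} (i j k : Fin (n+1)) (h₁ : i ≤ j) (h₂ : j ≤ k) :
    SimplexCategory.δ 2 ≫ SimplexCategory.mkOfLeComp i j k h₁ h₂ =
      SimplexCategory.mkOfLe i j h₁ := by
  ext x : 3
  fin_cases x <;> rfl

lemma δ0_mkOfLeComp {n : ℕ} (i j k : Fin (n+1)) (h₁ : i ≤ j) (h₂ : j ≤ k) :
    SimplexCategory.δ 0 ≫ SimplexCategory.mkOfLeComp i j k h₁ h₂ =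
      SimplexCategory.mkOfLe j k h₂ := by
  ext x : 3
  fin_cases x <;> rfl

section

variable {f : X _⦋1⦌ → ZMod d}
  (hf : ∀ σ : X _⦋2⦌, f (X.δ 1 σ) = f (X.δ 2 σ) + f (X.δ 0 σ))

include hf

lemma f_deg (v : X _⦋0⦌) : f (X.σ 0 v) = 0 := by
  have h := hf (X.σ 0 (X.σ 0 v))
  have e1 : X.δ (1 : Fin 3) (X.σ 0 (X.σ 0 v)) = X.σ 0 v := by
    have := types_congr_hom (X.δ_comp_σ_succ (i := (0 : Fin 2))) (X.σ 0 v)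
    simpa using this
  have e0 : X.δ (0 : Fin 3) (X.σ 0 (X.σ 0 v)) = X.σ 0 v := by
    have := types_congr_hom (X.δ_comp_σ_self (i := (0 : Fin 2))) (X.σ 0 v)
    simpa using this
  have e2 : X.δ (2 : Fin 3) (X.σ 0 (X.σ 0 v)) = X.σ 0 v := by
    have := types_congr_hom (X.δ_comp_σ_of_gt (i := (1 : Fin 2)) (j := (0 : Fin 1))
      (by decide)) (X.σ 0 v)
    simp only [types_comp_apply] at this
    rw [show ((1 : Fin 2).succ) = 2 from rfl] at this
    rw [show (Fin.castSucc (0 : Fin 1)) = 0 from rfl] at this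
    rw [this]
    have := types_congr_hom (X.δ_comp_σ_succ (i := (0 : Fin 1))) v
    simp only [types_comp_apply, types_id_apply] at this
    rw [show ((0 : Fin 1).succ) = 1 from rfl] at this
    rw [this]
  rw [e0, e1, e2] at h
  exact left_eq_add.mp h

lemma f_refl {n : ℕ} (i : Fin (n+1)) (x : X _⦋n⦌) : f (ed i i le_rfl x) = 0 := by
  have : SimplexCategory.mkOfLe i i le_rfl =
      SimplexCategory.σ 0 ≫ SimplexCategory.const ⦋0⦌ ⦋n⦌ i := by
    ext x : 3; fin_cases x <;> rfl
  rw [ed, this]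
  rw [CategoryTheory.op_comp, X.map_comp]
  exact f_deg hf _

lemma f_comp {n : ℕ} (i j k : Fin (n+1)) (h₁ : i ≤ j) (h₂ : j ≤ k) (x : X _⦋n⦌) :
    f (ed i k (h₁.trans h₂) x) = f (ed i j h₁ x) + f (ed j k h₂ x) := by
  have h := hf (X.map (SimplexCategory.mkOfLeComp i j k h₁ h₂).op x)
  simp only [SimplicialObject.δ, ← FunctorToTypes.map_comp_apply, ← op_comp,
    δ0_mkOfLeComp, δ1_mkOfLeComp, δ2_mkOfLeComp] at h
  exact h

end

variable (f : X _⦋1⦌ → ZMod d)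
  (hf : ∀ σ : X _⦋2⦌, f (X.δ 1 σ) = f (X.δ 2 σ) + f (X.δ 0 σ))

/-- The functor `Fin (n+1) ⥤ SingleObj G` associated to an `n`-simplex. -/
def mkApp (Δ : SimplexCategoryᵒᵖ) (x : X.obj Δ) : ComposableArrows (SingleObj G) Δ.unop.len where
  obj _ := SingleObj.star G
  map {i j} g := Multiplicative.ofAdd (f (ed i j (leOfHom g) x))
  map_id i := by
    show Multiplicative.ofAdd (f (ed i i (leOfHom (𝟙 i)) x)) = 𝟙 (SingleObj.star G)
    rw [show f (ed i i (leOfHom (𝟙 i)) x) = 0 from f_refl hf i x]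
    rfl
  map_comp {i j k} g h := by
    show Multiplicative.ofAdd (f (ed i k (leOfHom (g ≫ h)) x)) =
      Multiplicative.ofAdd (f (ed j k (leOfHom h) x)) *
        Multiplicative.ofAdd (f (ed i j (leOfHom g) x))
    rw [← ofAdd_add,
      show f (ed i k (leOfHom (g ≫ h)) x) =
          f (ed i j (leOfHom g) x) + f (ed j k (leOfHom h) x) from
        f_comp hf i j k (leOfHom g) (leOfHom h) x, add_comm]

/-- The simplicial map `X ⟶ N(ZMod d)` associated to a 1-cocycle. -/
def mkHom : X ⟶ nerve (SingleObj G) where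
  app Δ := TypeCat.ofHom (fun x => mkApp f hf Δ x)
  naturality Δ Δ' θ := by
    ext x
    apply Eq.symm
    show (nerve (SingleObj G)).map θ (mkApp f hf Δ x) = mkApp f hf Δ' (X.map θ x)
    refine CategoryTheory.Functor.ext (fun i => rfl) ?_
    intro i j g
    simp only [eqToHom_refl, Category.comp_id, Category.id_comp]
    show Multiplicative.ofAdd (f (ed (θ.unop.toOrderHom i) (θ.unop.toOrderHom j)
        (θ.unop.toOrderHom.monotone (leOfHom g)) x)) =
      Multiplicative.ofAdd (f (ed i j (leOfHom g) (X.map θ x)))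
    congr 1
    simp only [ed]
    rw [← FunctorToTypes.map_comp_apply,
      show θ ≫ (SimplexCategory.mkOfLe i j (leOfHom g)).op =
          (SimplexCategory.mkOfLe i j (leOfHom g) ≫ θ.unop).op by
        rw [op_comp, Quiver.Hom.op_unop]]
    exact congrArg (fun u => f (X.map (Quiver.Hom.op u) x))
      (mkOfLe_comp (m := Δ.unop.len) i j (leOfHom g) θ.unop).symm

lemma edgeLabel_mkHom : edgeLabel d X (mkHom f hf) = f := by
  funext e
  show f (ed 0 1 (by decide) e) = f e
  congr 1
  rw [ed, show SimplexCategory.mkOfLe (0 : Fin 2) 1 (by decide) = 𝟙 _ by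
    ext x : 3; fin_cases x <;> rfl]
  simp

end Cocycle

namespace Cocycle

variable {d : ℕ} {X : SSet.{0}}

local notation "G" => Multiplicative (ZMod d)

lemma edgeLabel_ed (r : X ⟶ nerve (SingleObj G)) {n : ℕ} (i j : Fin (n+1)) (h : i ≤ j)
    (x : X _⦋n⦌) :
    Multiplicative.ofAdd (edgeLabel d X r (ed i j h x)) =
      (r.app (Opposite.op ⦋n⦌) x).map (homOfLE h) := by
  have hnat : r.app (Opposite.op ⦋1⦌) (X.map (SimplexCategory.mkOfLe i j h).op x) =
      (nerve (SingleObj G)).map (SimplexCategory.mkOfLe i j h).op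
        (r.app (Opposite.op ⦋n⦌) x) :=
    types_congr_hom (r.naturality (SimplexCategory.mkOfLe i j h).op) x
  show ComposableArrows.map' (r.app (Opposite.op ⦋1⦌) (ed i j h x)) 0 1 =
    (r.app (Opposite.op ⦋n⦌) x).map (homOfLE h)
  rw [ed, hnat]
  rfl

end Cocycle

namespace Cocycle

variable {d : ℕ} {X : SSet.{0}}

local notation "G" => Multiplicative (ZMod d)

lemma δ1_eq : SimplexCategory.δ (1 : Fin 3) =
    SimplexCategory.mkOfLe (0 : Fin 3) 2 (by decide) := by
  ext x : 3; fin_cases x <;> decide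

lemma δ2_eq : SimplexCategory.δ (2 : Fin 3) =
    SimplexCategory.mkOfLe (0 : Fin 3) 1 (by decide) := by
  ext x : 3; fin_cases x <;> decide

lemma δ0_eq : SimplexCategory.δ (0 : Fin 3) =
    SimplexCategory.mkOfLe (1 : Fin 3) 2 (by decide) := by
  ext x : 3; fin_cases x <;> decide

lemma edgeLabel_cocycle (r : X ⟶ nerve (SingleObj G)) (σ : X _⦋2⦌) :
    edgeLabel d X r (X.δ 1 σ) = edgeLabel d X r (X.δ 2 σ) + edgeLabel d X r (X.δ 0 σ) := by
  have e1 : X.δ (1 : Fin 3) σ = ed (0 : Fin 3) 2 (by decide) σ := by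
    rw [ed, ← δ1_eq]; rfl
  have e2 : X.δ (2 : Fin 3) σ = ed (0 : Fin 3) 1 (by decide) σ := by
    rw [ed, ← δ2_eq]; rfl
  have e0 : X.δ (0 : Fin 3) σ = ed (1 : Fin 3) 2 (by decide) σ := by
    rw [ed, ← δ0_eq]; rfl
  rw [e0, e1, e2]
  apply Multiplicative.ofAdd.injective
  rw [ofAdd_add, edgeLabel_ed, edgeLabel_ed, edgeLabel_ed]
  rw [show (homOfLE (by decide : (0 : Fin 3) ≤ 2)) =
    homOfLE (by decide : (0 : Fin 3) ≤ 1) ≫ homOfLE (by decide : (1 : Fin 3) ≤ 2) from rfl]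
  erw [Functor.map_comp, SingleObj.comp_as_mul, mul_comm]

lemma mkHom_eq (r : X ⟶ nerve (SingleObj G)) :
    mkHom (edgeLabel d X r) (edgeLabel_cocycle r) = r := by
  apply NatTrans.ext
  funext Δ; ext x
  show mkApp (edgeLabel d X r) (edgeLabel_cocycle r) Δ x = r.app Δ x
  refine CategoryTheory.Functor.ext (fun i => rfl) ?_
  intro i j g
  simp only [eqToHom_refl, Category.comp_id, Category.id_comp]
  exact edgeLabel_ed r i j (leOfHom g) x

end Cocycle

/-- **Simplicial maps into the nerve of `ZMod d` are 1-cocycles.**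
For a simplicial set `X` and `d ≥ 1`, the map sending a simplicial morphism
`r : X ⟶ N(ZMod d)` to its induced labeling of 1-simplices is a bijection onto the set
of functions `f : X₁ → ZMod d` satisfying `f (d₁ σ) = f (d₂ σ) + f (d₀ σ)` for every
2-simplex `σ` of `X`. -/
theorem maps_to_nerve_equiv_cocycles (d : ℕ) (hd : 1 ≤ d) (X : SSet) :
    Function.Injective
      (fun r : X ⟶ nerve (SingleObj (Multiplicative (ZMod d))) => edgeLabel d X r) ∧
    Set.range
      (fun r : X ⟶ nerve (SingleObj (Multiplicative (ZMod d))) => edgeLabel d X r) =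
      ({f |
        ∀ σ : X _⦋2⦌, f (X.δ 1 σ) = f (X.δ 2 σ) + f (X.δ 0 σ)} : Set (X _⦋1⦌ → ZMod d)) := by
  have key : ∀ (f₁ f₂ : X _⦋1⦌ → ZMod d) hf₁ hf₂, f₁ = f₂ →
      Cocycle.mkHom (d := d) f₁ hf₁ = Cocycle.mkHom f₂ hf₂ := by
    rintro f₁ f₂ hf₁ hf₂ rfl; rfl
  constructor
  · intro r₁ r₂ h
    rw [← Cocycle.mkHom_eq r₁, ← Cocycle.mkHom_eq r₂]
    exact key _ _ _ _ h
  · ext f'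
    simp only [Set.mem_range, Set.mem_setOf_eq]
    constructor
    · rintro ⟨r, rfl⟩
      exact Cocycle.edgeLabel_cocycle r
    · intro hf'
      exact ⟨Cocycle.mkHom f' hf', Cocycle.edgeLabel_mkHom f' hf'⟩
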